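/- Let (q_n) be a sequence of probability distributions on a finite set, each partitioned into blocks with designated maximal elements, and suppose the total probability of maximal elements tends to 1 as n → ∞. Then for any fixed nonzero shift λ acting freely on each block, ∑_k q_n(k) · q_n(k+λ) / P_n(block of k) → 0. -/

import Mathlib

/-- if the total probability of the designated per-orbit maximal elements
tends to 1, then the λ-shifted overlap sum tends to 0, for any fixed λ ≠ 0 in a finite
abelian group H acting freely on K (orbits are the blocks). The total probability of
maximal elements equals (∑_k q_n(mx_n k))/|H| since each orbit has |H| elements. -/
theorem stmt8 {K : Type*} [Fintype K] {H : Type*} [AddCommGroup H] [Fintype H]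
    [AddAction H K]
    (hfree : ∀ (μ : H) (k : K), μ +ᵥ k = k → μ = 0)
    (q : ℕ → K → ℝ) (hq0 : ∀ n k, 0 ≤ q n k) (hq1 : ∀ n, ∑ k, q n k = 1)
    (mx : ℕ → K → K)
    (hmx_orbit : ∀ n k, ∃ μ : H, mx n k = μ +ᵥ k)
    (hmx_const : ∀ n (μ : H) (k : K), mx n (μ +ᵥ k) = mx n k)
    (hmx_max : ∀ n (k : K) (μ : H), q n (μ +ᵥ k) ≤ q n (mx n k))
    (P : ℕ → K → ℝ) (hP : ∀ n k, P n k = ∑ μ : H, q n (μ +ᵥ k))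
    (hsucc : Filter.Tendsto (fun n => (∑ k, q n (mx n k)) / (Fintype.card H : ℝ))
      Filter.atTop (nhds 1))
    (lam : H) (hlam : lam ≠ 0) :
    Filter.Tendsto (fun n => ∑ k, q n k * q n (lam +ᵥ k) / P n k)
      Filter.atTop (nhds 0) := by
  classical
  set c : ℝ := (Fintype.card H : ℝ) with hc
  have hcpos : (0:ℝ) < c := by
    simpa [hc] using (Nat.cast_pos (α := ℝ)).mpr Fintype.card_pos
  have hPnn : ∀ n k, 0 ≤ P n k := by
    intro n k
    rw [hP]
    exact Finset.sum_nonneg fun _ _ => hq0 _ _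
  -- pairwise bound on subsets of the orbit sum
  have pair_le : ∀ n (k : K) (μ ν : H), μ ≠ ν →
      q n (μ +ᵥ k) + q n (ν +ᵥ k) ≤ P n k := by
    intro n k μ ν hμν
    rw [hP]
    have hsub : ({μ, ν} : Finset H) ⊆ Finset.univ := Finset.subset_univ _
    have := Finset.sum_le_sum_of_subset_of_nonneg hsub
      (fun i _ _ => hq0 n (i +ᵥ k)) (f := fun i => q n (i +ᵥ k))
    rwa [Finset.sum_pair hμν] at this
  -- key per-term bound
  have key : ∀ n k, q n k * q n (lam +ᵥ k) / P n k ≤ P n k - q n (mx n k) := by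
    intro n k
    have ha : q n k ≤ q n (mx n k) := by
      simpa using hmx_max n k 0
    have hb : q n (lam +ᵥ k) ≤ q n (mx n k) := hmx_max n k lam
    obtain ⟨μ₀, hμ₀⟩ := hmx_orbit n k
    rcases eq_or_lt_of_le (hPnn n k) with h0 | hpos
    · -- P = 0 : everything vanishes
      have hall : ∀ μ : H, q n (μ +ᵥ k) = 0 := by
        intro μ
        have h := (Finset.sum_eq_zero_iff_of_nonneg
          (fun i (_ : i ∈ Finset.univ) => hq0 n (i +ᵥ k))).mp (by rw [← hP]; exact h0.symm)
        exact h μ (Finset.mem_univ μ)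
      have h1 : q n k = 0 := by simpa using hall 0
      have h2 : q n (mx n k) = 0 := by rw [hμ₀]; exact hall μ₀
      simp [h1, h2, ← h0]
    · have hMle : q n (mx n k) ≤ P n k := by
        rw [hμ₀, hP]
        exact Finset.single_le_sum (fun i _ => hq0 n (i +ᵥ k)) (Finset.mem_univ μ₀)
      -- q k * q (lam+k) ≤ min * P
      have hdiv : q n k * q n (lam +ᵥ k) / P n k ≤ min (q n k) (q n (lam +ᵥ k)) := by
        rw [div_le_iff₀ hpos]
        rcases le_total (q n k) (q n (lam +ᵥ k)) with h | h
        · rw [min_eq_left h]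
          exact mul_le_mul_of_nonneg_left (hb.trans hMle) (hq0 n k)
        · rw [min_eq_right h]
          nlinarith [mul_le_mul_of_nonneg_right (ha.trans hMle) (hq0 n (lam +ᵥ k))]
      -- min + M ≤ P
      have hmin : min (q n k) (q n (lam +ᵥ k)) + q n (mx n k) ≤ P n k := by
        by_cases hμ0 : μ₀ = 0
        · have hM : q n (mx n k) = q n k := by
            rw [hμ₀, hμ0, zero_vadd]
          have := pair_le n k lam 0 hlam
          rw [zero_vadd] at this
          have hle : min (q n k) (q n (lam +ᵥ k)) ≤ q n (lam +ᵥ k) := min_le_right _ _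
          linarith [hM ▸ this]
        · have hM : q n (mx n k) = q n (μ₀ +ᵥ k) := by rw [hμ₀]
          have := pair_le n k 0 μ₀ (fun h => hμ0 h.symm)
          rw [zero_vadd] at this
          have hle : min (q n k) (q n (lam +ᵥ k)) ≤ q n k := min_le_left _ _
          linarith [hM ▸ this]
      linarith
  -- sum the bounds
  have h2 : ∀ n, ∑ k : K, P n k = c := by
    intro n
    simp_rw [hP]
    rw [Finset.sum_comm]
    have hμ : ∀ μ : H, ∑ k : K, q n (μ +ᵥ k) = 1 := by
      intro μ
      rw [← hq1 n]
      exact Fintype.sum_bijective (μ +ᵥ ·) (AddAction.bijective μ) _ _ (fun _ => rfl)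
    simp [hμ, hc, mul_comm]
  have hub : ∀ n, ∑ k, q n k * q n (lam +ᵥ k) / P n k ≤ c - ∑ k, q n (mx n k) := by
    intro n
    have h1 : ∑ k, q n k * q n (lam +ᵥ k) / P n k ≤ ∑ k, (P n k - q n (mx n k)) :=
      Finset.sum_le_sum fun k _ => key n k
    rwa [Finset.sum_sub_distrib, h2 n] at h1
  have hnn : ∀ n, 0 ≤ ∑ k, q n k * q n (lam +ᵥ k) / P n k := by
    intro n
    exact Finset.sum_nonneg fun k _ =>
      div_nonneg (mul_nonneg (hq0 n k) (hq0 n _)) (hPnn n k)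
  have hg : Filter.Tendsto (fun n => c - ∑ k, q n (mx n k)) Filter.atTop (nhds 0) := by
    have h : Filter.Tendsto (fun n => c * ((∑ k, q n (mx n k)) / c))
        Filter.atTop (nhds (c * 1)) := hsucc.const_mul c
    have heq : (fun n => c * ((∑ k, q n (mx n k)) / c))
        = fun n => ∑ k, q n (mx n k) := by
      funext n; field_simp
    rw [heq, mul_one] at h
    have := Filter.Tendsto.sub (tendsto_const_nhds (x := c)) h
    simpa using this
  exact squeeze_zero hnn hub hg
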